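/- arXiv:1008.2421 — 2 statements merged into one kernel-verified Lean document; each statement's English description precedes it below -/
import Mathlib

section
/- Suppose θ* ∈ W^{m,2} maximizes pqll over W^{m,2} and θ* has the natural-spline structure described in the context. Then for every k ∈ {1, …, n} and every y ∈ [y_k, y_{k+1}) (with the convention y_{n+1} = +∞), θ*^{(2m−1)}(y) = ((−1)^m / (n λ)) ( k − ∑_{j=1}^k r_j² exp(2 θ*(y_j)) ). -/
open MeasureTheory Real Filter Set

/-- The weighted quasi-log-likelihood. -/
noncomputable def qll (n : ℕ) (y r : ℕ → ℝ) (θ : ℝ → ℝ) : ℝ :=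
  (1 / n) * ∑ j ∈ Finset.Icc 1 n,
    (θ (y j) - (1 / 2) * (r j) ^ 2 * Real.exp (2 * θ (y j)))

/-- `MemW m f g` says that `f` belongs to `W^{m,2}`: `f^{(m-1)}` exists everywhere
(so `f` is `C^{m-1}`) and is absolutely continuous with a.e. (locally integrable)
derivative `g`, which is square-integrable over `ℝ`; `g` is a version of `f^{(m)}`. -/
def MemW (m : ℕ) (f g : ℝ → ℝ) : Prop :=
  ContDiff ℝ (m - 1 : ℕ) f ∧
  LocallyIntegrable g volume ∧
  (∀ x : ℝ, iteratedDeriv (m - 1) f x =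
      iteratedDeriv (m - 1) f 0 + ∫ t in (0 : ℝ)..x, g t) ∧
  MemLp g 2 volume

/-- The penalized quasi-log-likelihood, where `g` is (a version of) `θ^{(m)}`. -/
noncomputable def pqll (n : ℕ) (y r : ℕ → ℝ) (lam : ℝ) (θ g : ℝ → ℝ) : ℝ :=
  qll n y r θ - (lam / 2) * ∫ z : ℝ, (g z) ^ 2

/-- `NatSpline n m y θ g` encodes the natural-spline structure of `θ` with knots
`y 1 < ⋯ < y n`, where `g` is the right-continuous version of `θ^{(2m−1)}`:
`θ` is `2m−2` times continuously differentiable; it coincides with a polynomial of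
degree at most `2m−1` on each of the open intervals `(−∞, y 1)`,
`(y k, y (k+1))` for `k = 1, …, n−1`, and `(y n, ∞)`; its derivatives of orders
`m, …, 2m−1` vanish on `(−∞, y 1)` and `(y n, ∞)`; `g` agrees with the genuine
`(2m−1)`-th derivative of `θ` away from the knots; and `g` is constant on each
interval `[y k, y (k+1))` (with the convention `y (n+1) = +∞`). -/
def NatSpline (n m : ℕ) (y : ℕ → ℝ) (θ g : ℝ → ℝ) : Prop :=
  ContDiff ℝ (2 * m - 2 : ℕ) θ ∧
  (∃ p : Polynomial ℝ, p.natDegree ≤ 2 * m - 1 ∧ ∀ x, x < y 1 → θ x = p.eval x) ∧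
  (∀ k, 1 ≤ k → k < n → ∃ p : Polynomial ℝ, p.natDegree ≤ 2 * m - 1 ∧
      ∀ x, y k < x → x < y (k + 1) → θ x = p.eval x) ∧
  (∃ p : Polynomial ℝ, p.natDegree ≤ 2 * m - 1 ∧ ∀ x, y n < x → θ x = p.eval x) ∧
  (∀ i, m ≤ i → i ≤ 2 * m - 2 → ∀ x, (x < y 1 ∨ y n < x) → iteratedDeriv i θ x = 0) ∧
  (∀ x, (x < y 1 ∨ y n < x) → g x = 0) ∧
  (∀ x, (∀ k, 1 ≤ k → k ≤ n → x ≠ y k) → g x = iteratedDeriv (2 * m - 1) θ x) ∧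
  (∀ k, 1 ≤ k → k ≤ n → ∀ x, y k ≤ x → (k < n → x < y (k + 1)) → g x = g (y k))

lemma tsupport_iteratedDeriv_subset (f : ℝ → ℝ) (k : ℕ) :
    tsupport (iteratedDeriv k f) ⊆ tsupport f := by
  induction k with
  | zero => simp [iteratedDeriv_zero]
  | succ k ih =>
    rw [iteratedDeriv_succ]
    exact closure_minimal (support_deriv_subset.trans ih) isClosed_closure

lemma iteratedDeriv_eq_zero_of_nmem_tsupport {f : ℝ → ℝ} {k : ℕ} {x : ℝ}
    (hx : x ∉ tsupport f) : iteratedDeriv k f x = 0 :=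
  image_eq_zero_of_notMem_tsupport fun hmem => hx (tsupport_iteratedDeriv_subset f k hmem)

lemma hasDerivAt_iteratedDeriv_of_contDiff {f : ℝ → ℝ} {N k : ℕ} (hf : ContDiff ℝ N f)
    (hk : k < N) (x : ℝ) : HasDerivAt (iteratedDeriv k f) (iteratedDeriv (k + 1) f x) x := by
  have hd := (hf.differentiable_iteratedDeriv k (by exact_mod_cast hk)).differentiableAt (x := x)
  simpa [iteratedDeriv_succ] using hd.hasDerivAt

lemma hasDerivAt_iteratedDeriv_of_smooth {f : ℝ → ℝ} (hf : ContDiff ℝ (⊤:ℕ∞) f) (k : ℕ) (x : ℝ) :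
    HasDerivAt (iteratedDeriv k f) (iteratedDeriv (k + 1) f x) x :=
  hasDerivAt_iteratedDeriv_of_contDiff (hf.of_le (mod_cast le_top)) (Nat.lt_succ_self k) x

lemma iteratedDeriv_add' {f g : ℝ → ℝ} {k : ℕ} (hf : ContDiff ℝ k f) (hg : ContDiff ℝ k g)
    (x : ℝ) : iteratedDeriv k (fun z => f z + g z) x
      = iteratedDeriv k f x + iteratedDeriv k g x := by
  have := iteratedDerivWithin_add (mem_univ x) uniqueDiffOn_univ
    (hf.contDiffWithinAt (s := univ)) (hg.contDiffWithinAt (s := univ))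
  simp only [iteratedDerivWithin_univ] at this; exact this

lemma iteratedDeriv_const_mul' {f : ℝ → ℝ} {k : ℕ} (c : ℝ) (hf : ContDiff ℝ k f) (x : ℝ) :
    iteratedDeriv k (fun z => c * f z) x = c * iteratedDeriv k f x := by
  have := iteratedDerivWithin_const_mul (mem_univ x) uniqueDiffOn_univ c
    (hf.contDiffWithinAt (s := univ))
  simpa [iteratedDerivWithin_univ] using this

lemma locallyIntegrable_intervalIntegrable {f : ℝ → ℝ}
    (hf : MeasureTheory.LocallyIntegrable f volume) (a b : ℝ) :
    IntervalIntegrable f volume a b :=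
  intervalIntegrable_iff.mpr
    ((hf.integrableOn_isCompact isCompact_uIcc).mono_set Set.uIoc_subset_uIcc)

lemma smooth_ftc {f : ℝ → ℝ} (hf : ContDiff ℝ (⊤:ℕ∞) f) (k : ℕ) (x : ℝ) :
    iteratedDeriv k f x = iteratedDeriv k f 0 + ∫ t in (0:ℝ)..x, iteratedDeriv (k+1) f t := by
  have : ∫ t in (0:ℝ)..x, iteratedDeriv (k+1) f t = iteratedDeriv k f x - iteratedDeriv k f 0 :=
    intervalIntegral.integral_eq_sub_of_hasDerivAt
      (fun t _ => hasDerivAt_iteratedDeriv_of_smooth hf k t)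
      ((hf.continuous_iteratedDeriv (k+1) (mod_cast le_top)).intervalIntegrable 0 x)
  rw [this]; ring

lemma integrable_mul_of_memL2 {f g : ℝ → ℝ} (hf : MemLp f 2 volume) (hg : MemLp g 2 volume) :
    Integrable (fun x => f x * g x) volume := by
  have h1 : Integrable (fun x => (f x + g x)^2) volume := by
    simpa using (hf.add hg).integrable_sq
  have h2 := hf.integrable_sq
  have h3 := hg.integrable_sq
  have : (fun x => f x * g x) = fun x => (((f x + g x)^2 - f x ^ 2) - g x ^ 2) * (1/2) := by
    funext x; ring
  rw [this]
  exact ((h1.sub h2).sub h3).mul_const _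

lemma poly_iteratedDeriv (p : Polynomial ℝ) (k : ℕ) :
    iteratedDeriv k (fun x => p.eval x) = fun x => (Polynomial.derivative^[k] p).eval x := by
  induction k generalizing p with
  | zero => simp [iteratedDeriv_zero]
  | succ k ih =>
    rw [iteratedDeriv_succ']
    have : deriv (fun x => p.eval x) = fun x => (Polynomial.derivative p).eval x := by
      funext x; exact Polynomial.deriv (p := p)
    rw [this, ih, Function.iterate_succ_apply]

lemma exists_bump (c ε : ℝ) (hε : 0 < ε) :
    ∃ h : ℝ → ℝ, ContDiff ℝ (⊤:ℕ∞) h ∧ HasCompactSupport h ∧ h c = 1 ∧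
      (∀ x, ε ≤ |x - c| → h x = 0) := by
  refine ⟨(⟨ε/2, ε, by positivity, by linarith⟩ : ContDiffBump c), ContDiffBump.contDiff _,
    ContDiffBump.hasCompactSupport _, ContDiffBump.one_of_mem_closedBall _ ?_, fun x hx => ?_⟩
  · simp only [Metric.mem_closedBall, dist_self]
    positivity
  · exact ContDiffBump.zero_of_le_dist _ (by rw [Real.dist_eq]; exact hx)

lemma ibp_ac {F f H H' : ℝ → ℝ} {a b : ℝ} (hab : a ≤ b)
    (hf : MeasureTheory.LocallyIntegrable f volume)
    (hFTC : ∀ x : ℝ, F x = F 0 + ∫ t in (0:ℝ)..x, f t)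
    (hFc : Continuous F)
    (hH : ∀ x, HasDerivAt H (H' x) x) (hH'c : Continuous H')
    (hHa : H a = 0) (hHb : H b = 0) :
    ∫ x in Ioc a b, f x * H x = - ∫ x in Ioc a b, F x * H' x := by
  set μ := volume.restrict (Set.Ioc a b) with hμ
  have hFab : ∀ s : ℝ, F s - F a = ∫ t in a..s, f t := by
    intro s
    rw [hFTC s, hFTC a, ← intervalIntegral.integral_interval_sub_left
      (locallyIntegrable_intervalIntegrable hf 0 s)
      (locallyIntegrable_intervalIntegrable hf 0 a)]
    ring
  have hHsub : ∀ u v : ℝ, ∫ s in u..v, H' s = H v - H u := fun u v =>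
    intervalIntegral.integral_eq_sub_of_hasDerivAt (fun t _ => hH t)
      (hH'c.intervalIntegrable u v)
  have hfI : Integrable f μ :=
    (hf.integrableOn_isCompact isCompact_Icc).mono_set Set.Ioc_subset_Icc_self
  have hH'I : Integrable H' μ := hH'c.integrableOn_Ioc
  set K : ℝ → ℝ → ℝ := fun t s => if t < s then f t * H' s else 0 with hK
  have hSet : MeasurableSet {p : ℝ × ℝ | p.1 < p.2} :=
    measurableSet_lt measurable_fst measurable_snd
  have hKint : Integrable (Function.uncurry K) (μ.prod μ) := by
    have hprod : Integrable (fun p : ℝ × ℝ => f p.1 * H' p.2) (μ.prod μ) :=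
      hfI.mul_prod hH'I
    have h1 : Function.uncurry K
        = Set.indicator {p : ℝ × ℝ | p.1 < p.2} (fun p => f p.1 * H' p.2) := by
      funext p; simp [hK, Function.uncurry, Set.indicator_apply, Set.mem_setOf_eq]
    rw [h1]
    exact hprod.indicator hSet
  have inner1 : ∀ t ∈ Set.Ioc a b, ∫ s, K t s ∂μ = - (f t * H t) := by
    intro t ht
    have h1 : (fun s => K t s) = fun s => (Set.Ioi t).indicator (fun s => f t * H' s) s := by
      funext s; simp [hK, Set.indicator_apply, Set.mem_Ioi]
    rw [h1, hμ, setIntegral_indicator measurableSet_Ioi]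
    have h2 : Set.Ioc a b ∩ Set.Ioi t = Set.Ioc t b := by
      ext u
      simp only [Set.mem_inter_iff, Set.mem_Ioc, Set.mem_Ioi]
      constructor
      · rintro ⟨⟨_, h2⟩, h3⟩; exact ⟨h3, h2⟩
      · rintro ⟨h1', h2⟩; exact ⟨⟨ht.1.trans h1', h2⟩, h1'⟩
    rw [h2, MeasureTheory.integral_const_mul, ← intervalIntegral.integral_of_le ht.2,
      hHsub t b, hHb]
    ring
  have inner2 : ∀ s ∈ Set.Ioc a b, ∫ t, K t s ∂μ = (F s - F a) * H' s := by
    intro s hs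
    have h1 : (fun t => K t s) = fun t => (Set.Iio s).indicator (fun t => f t * H' s) t := by
      funext t; simp [hK, Set.indicator_apply, Set.mem_Iio]
    rw [h1, hμ, setIntegral_indicator measurableSet_Iio]
    have h2 : Set.Ioc a b ∩ Set.Iio s = Set.Ioo a s := by
      ext u
      simp only [Set.mem_inter_iff, Set.mem_Ioc, Set.mem_Ioo, Set.mem_Iio]
      constructor
      · rintro ⟨⟨h1', _⟩, h3⟩; exact ⟨h1', h3⟩
      · rintro ⟨h1', h2'⟩; exact ⟨⟨h1', (h2'.le.trans hs.2)⟩, h2'⟩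
    rw [h2, MeasureTheory.integral_mul_const, ← MeasureTheory.integral_Ioc_eq_integral_Ioo,
      ← intervalIntegral.integral_of_le hs.1.le, ← hFab s]
  have swap : ∫ t, (∫ s, K t s ∂μ) ∂μ = ∫ s, (∫ t, K t s ∂μ) ∂μ :=
    MeasureTheory.integral_integral_swap hKint
  have hFH' : Integrable (fun s => F s * H' s) μ := (hFc.mul hH'c).integrableOn_Ioc
  have hFaH' : Integrable (fun s => F a * H' s) μ := (continuous_const.mul hH'c).integrableOn_Ioc
  have hH'per : ∫ s in Set.Ioc a b, H' s = 0 := by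
    rw [← intervalIntegral.integral_of_le hab, hHsub a b, hHa, hHb]; ring
  calc ∫ x in Set.Ioc a b, f x * H x
      = ∫ t in Set.Ioc a b, - (∫ s, K t s ∂μ) :=
        setIntegral_congr_fun measurableSet_Ioc (fun t ht => by rw [inner1 t ht]; ring)
    _ = - ∫ t, (∫ s, K t s ∂μ) ∂μ := by rw [hμ, MeasureTheory.integral_neg]
    _ = - ∫ s, (∫ t, K t s ∂μ) ∂μ := by rw [swap]
    _ = - ∫ s in Set.Ioc a b, (F s - F a) * H' s := by
        rw [hμ]
        congr 1
        exact setIntegral_congr_fun measurableSet_Ioc (fun s hs => inner2 s hs)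
    _ = - ∫ x in Set.Ioc a b, F x * H' x := by
        have hsplit : ∫ s in Set.Ioc a b, (F s - F a) * H' s
            = (∫ s in Set.Ioc a b, F s * H' s) - ∫ s in Set.Ioc a b, F a * H' s := by
          rw [← MeasureTheory.integral_sub hFH' hFaH']
          exact setIntegral_congr_fun measurableSet_Ioc (fun s _ => by ring)
        rw [hsplit, MeasureTheory.integral_const_mul, hH'per, mul_zero, sub_zero]

lemma eventuallyEq_iteratedDeriv {f g : ℝ → ℝ} {x : ℝ} (hfg : f =ᶠ[nhds x] g) (k : ℕ) :
    iteratedDeriv k f =ᶠ[nhds x] iteratedDeriv k g := by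
  induction k with
  | zero => simpa [iteratedDeriv_zero] using hfg
  | succ k ih => rw [iteratedDeriv_succ, iteratedDeriv_succ]; exact ih.deriv

lemma euler_lagrange (n : ℕ) (μ : ℕ) (lam : ℝ)
    (y r : ℕ → ℝ) (θs gθ : ℝ → ℝ) (hθ : MemW (μ+1) θs gθ)
    (hmax : ∀ f g : ℝ → ℝ, MemW (μ+1) f g → pqll n y r lam f g ≤ pqll n y r lam θs gθ)
    (h : ℝ → ℝ) (hsm : ContDiff ℝ (⊤:ℕ∞) h) (hcs : HasCompactSupport h) :
    (1/(n:ℝ)) * ∑ j ∈ Finset.Icc 1 n,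
        ((1 - r j ^ 2 * Real.exp (2 * θs (y j))) * h (y j))
      = lam * ∫ z, gθ z * iteratedDeriv (μ+1) h z := by
  obtain ⟨hC, hLI, hFTC, hL2⟩ := hθ
  simp only [Nat.add_sub_cancel] at hC hFTC
  set Hm : ℝ → ℝ := iteratedDeriv (μ+1) h with hHmdef
  have HmC : Continuous Hm := hsm.continuous_iteratedDeriv _ (mod_cast le_top)
  have HmCS : HasCompactSupport Hm :=
    IsCompact.of_isClosed_subset hcs (isClosed_tsupport _) (tsupport_iteratedDeriv_subset h (μ+1))
  have HmL2 : MemLp Hm 2 volume := HmC.memLp_of_hasCompactSupport HmCS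
  have I2 : Integrable (fun z => gθ z ^ 2) volume := hL2.integrable_sq
  have Icr : Integrable (fun z => gθ z * Hm z) volume := integrable_mul_of_memL2 hL2 HmL2
  have IH2 : Integrable (fun z => Hm z ^ 2) volume := HmL2.integrable_sq
  set Q := ∫ z, gθ z ^ 2 with hQ
  set I := ∫ z, gθ z * Hm z with hI
  set J := ∫ z, Hm z ^ 2 with hJ
  have hexps : ∀ t : ℝ, (∫ z, (gθ z + t * Hm z) ^ 2) = Q + t * (2*I) + t^2 * J := by
    intro t
    have e1 : (fun z => (gθ z + t * Hm z)^2)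
        = fun z => gθ z^2 + ((2*t) * (gθ z * Hm z) + (t^2) * (Hm z ^2)) := by
      funext z; ring
    have Ia : Integrable (fun z => (2*t) * (gθ z * Hm z) + (t^2) * (Hm z ^ 2)) volume :=
      (Icr.const_mul (2*t)).add (IH2.const_mul (t^2))
    rw [e1, MeasureTheory.integral_add I2 Ia,
      MeasureTheory.integral_add (Icr.const_mul (2*t)) (IH2.const_mul (t^2)),
      MeasureTheory.integral_const_mul, MeasureTheory.integral_const_mul]
    rw [hQ, hI, hJ]; ring
  have hmemW : ∀ t : ℝ, MemW (μ+1) (fun x => θs x + t * h x) (fun z => gθ z + t * Hm z) := by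
    intro t
    have hth : ContDiff ℝ (μ:ℕ) (fun z => t * h z) :=
      contDiff_const.mul (hsm.of_le (mod_cast le_top))
    refine ⟨?_, ?_, ?_, ?_⟩
    · simpa [Nat.add_sub_cancel] using hC.add hth
    · exact hLI.add ((continuous_const.mul HmC).locallyIntegrable)
    · intro x
      simp only [Nat.add_sub_cancel]
      have hsum0 := iteratedDeriv_add' hC hth 0
      have hsumx := iteratedDeriv_add' hC hth x
      have hcm0 := iteratedDeriv_const_mul' t (hsm.of_le (mod_cast le_top) : ContDiff ℝ (μ:ℕ) h) 0
      have hcmx := iteratedDeriv_const_mul' t (hsm.of_le (mod_cast le_top) : ContDiff ℝ (μ:ℕ) h) x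
      rw [hsumx, hsum0, hcmx, hcm0]
      rw [intervalIntegral.integral_add (g := fun s => t * Hm s) (locallyIntegrable_intervalIntegrable hLI 0 x)
        ((continuous_const.mul HmC).intervalIntegrable 0 x)]
      rw [intervalIntegral.integral_const_mul]
      have := smooth_ftc hsm μ x
      rw [hFTC x]
      rw [show iteratedDeriv μ h x = iteratedDeriv μ h 0 + ∫ s in (0:ℝ)..x, Hm s from this]
      ring
    · exact hL2.add (HmL2.const_mul t)
  set φ : ℝ → ℝ := fun t =>
    (1/(n:ℝ)) * ∑ j ∈ Finset.Icc 1 n,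
      ((θs (y j) + t * h (y j)) - (1/2) * (r j)^2 * Real.exp (2 * (θs (y j) + t * h (y j))))
    - (lam/2) * (Q + t * (2*I) + t^2 * J) with hφdef
  have hφeq : ∀ t, φ t = pqll n y r lam (fun x => θs x + t * h x) (fun z => gθ z + t * Hm z) := by
    intro t
    simp only [hφdef, pqll, qll, hexps t]
  have hφ0 : φ 0 = pqll n y r lam θs gθ := by
    simp only [hφdef, pqll, qll, hQ]
    norm_num
  have hlocmax : IsLocalMax φ 0 := by
    apply Filter.Eventually.of_forall
    intro t
    rw [hφeq t, hφ0]
    exact hmax _ _ (hmemW t)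
  have hDeriv : HasDerivAt φ
      ((1/(n:ℝ)) * ∑ j ∈ Finset.Icc 1 n,
        (1 * h (y j) - (1/2) * (r j)^2 * (Real.exp (2 * (θs (y j) + 0 * h (y j))) * (2 * (1 * h (y j)))))
      - (lam/2) * (0 + 1 * (2*I) + (2 * 0^1) * J)) 0 := by
    apply HasDerivAt.sub
    · apply HasDerivAt.const_mul
      apply HasDerivAt.fun_sum
      intro j _
      have hlin : HasDerivAt (fun t : ℝ => θs (y j) + t * h (y j)) (1 * h (y j)) 0 :=
        ((hasDerivAt_id 0).mul_const (h (y j))).const_add (θs (y j))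
      have hexp : HasDerivAt (fun t : ℝ => Real.exp (2 * (θs (y j) + t * h (y j))))
          (Real.exp (2 * (θs (y j) + 0 * h (y j))) * (2 * (1 * h (y j)))) 0 :=
        (hlin.const_mul 2).exp
      exact hlin.sub (hexp.const_mul ((1/2) * (r j)^2))
    · apply HasDerivAt.const_mul
      exact ((hasDerivAt_const 0 Q).add ((hasDerivAt_id 0).mul_const (2*I))).add
        ((hasDerivAt_pow 2 0).mul_const J)
  have hzero := hlocmax.hasDerivAt_eq_zero hDeriv
  have hsumeq : ∑ j ∈ Finset.Icc 1 n,
      (1 * h (y j) - (1/2) * (r j)^2 * (Real.exp (2 * (θs (y j) + 0 * h (y j))) * (2 * (1 * h (y j)))))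
      = ∑ j ∈ Finset.Icc 1 n, ((1 - r j ^ 2 * Real.exp (2 * θs (y j))) * h (y j)) := by
    apply Finset.sum_congr rfl
    intro j _
    rw [zero_mul, add_zero]
    ring
  rw [hsumeq] at hzero
  norm_num at hzero
  rw [one_div]
  linear_combination hzero

lemma chain (n μ : ℕ) (hn : 1 ≤ n)
    (y : ℕ → ℝ) (hy : ∀ i j, 1 ≤ i → i < j → j ≤ n → y i < y j)
    (θs gθ gsp : ℝ → ℝ)
    (hC2 : ContDiff ℝ (2*μ : ℕ) θs)
    (hpoly1 : ∃ p : Polynomial ℝ, ∀ x, x < y 1 → θs x = p.eval x)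
    (hpoly2 : ∀ k, 1 ≤ k → k < n → ∃ p : Polynomial ℝ,
        ∀ x, y k < x → x < y (k + 1) → θs x = p.eval x)
    (hpoly3 : ∃ p : Polynomial ℝ, ∀ x, y n < x → θs x = p.eval x)
    (hgsp0 : ∀ x, (x < y 1 ∨ y n < x) → gsp x = 0)
    (hgspd : ∀ x, (∀ k, 1 ≤ k → k ≤ n → x ≠ y k) → gsp x = iteratedDeriv (2*μ+1) θs x)
    (hgspc : ∀ k, 1 ≤ k → k ≤ n → ∀ x, y k ≤ x → (k < n → x < y (k+1)) → gsp x = gsp (y k))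
    (hFTC : ∀ x : ℝ, iteratedDeriv μ θs x = iteratedDeriv μ θs 0 + ∫ t in (0:ℝ)..x, gθ t)
    (hLI : MeasureTheory.LocallyIntegrable gθ volume)
    (h : ℝ → ℝ) (hsm : ContDiff ℝ (⊤:ℕ∞) h) (hcs : HasCompactSupport h) :
    ∫ z, gθ z * iteratedDeriv (μ+1) h z
      = (-1:ℝ)^μ * ∑ k ∈ Finset.range (n+1), ((if k = 0 then 0 else gsp (y k)) *
          ((if k + 1 ≤ n then h (y (k+1)) else 0) - (if k = 0 then 0 else h (y k)))) := by
  classical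
  -- monotonicity of knots (weak form)
  have hyle : ∀ i j, 1 ≤ i → i ≤ j → j ≤ n → y i ≤ y j := by
    intro i j h1 h2 h3
    rcases eq_or_lt_of_le h2 with rfl | hlt
    · exact le_rfl
    · exact (hy i j h1 hlt h3).le
  -- bounds for the support
  obtain ⟨R, hR⟩ : ∃ R : ℝ, tsupport h ⊆ Icc (-R) R := by
    obtain ⟨R, hR⟩ := hcs.isBounded.subset_closedBall 0
    exact ⟨R, by simpa [Real.closedBall_eq_Icc] using hR⟩
  set a : ℝ := min (y 1) (-R) - 1 with hadef
  set b : ℝ := max (y n) R + 1 with hbdef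
  have ha1 : a < y 1 := by
    have := min_le_left (y 1) (-R); simp only [hadef]; linarith
  have hbn : y n < b := by
    have := le_max_left (y n) R; simp only [hbdef]; linarith
  have hab : a < b := by
    have h1 := min_le_left (y 1) (-R)
    have h2 := le_max_left (y n) R
    have := hyle 1 n le_rfl hn le_rfl
    simp only [hadef, hbdef]; linarith
  have hZa : ∀ k : ℕ, iteratedDeriv k h a = 0 := by
    intro k
    apply iteratedDeriv_eq_zero_of_nmem_tsupport
    intro hmem
    have := (hR hmem).1
    have := min_le_right (y 1) (-R)
    linarith [(hR hmem).1, min_le_right (y 1) (-R)]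
  have hZb : ∀ k : ℕ, iteratedDeriv k h b = 0 := by
    intro k
    apply iteratedDeriv_eq_zero_of_nmem_tsupport
    intro hmem
    linarith [(hR hmem).2, le_max_right (y n) R]
  have hha : h a = 0 := by simpa [iteratedDeriv_zero] using hZa 0
  have hhb : h b = 0 := by simpa [iteratedDeriv_zero] using hZb 0
  -- partition points
  set T : ℕ → ℝ := fun k => if k = 0 then a else if k ≤ n then y k else b with hTdef
  have hT0 : T 0 = a := by simp [hTdef]
  have hTn1 : T (n+1) = b := by
    have h1 : ¬ (n + 1 = 0) := by omega
    have h2 : ¬ (n + 1 ≤ n) := by omega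
    simp [hTdef, h1, h2]
  have hTk : ∀ k, 1 ≤ k → k ≤ n → T k = y k := by
    intro k h1 h2
    have : ¬ k = 0 := by omega
    simp [hTdef, this, h2]
  have hTmono : ∀ k, k ≤ n → T k < T (k+1) := by
    intro k hk
    by_cases k0 : k = 0
    · subst k0; rw [hT0, hTk 1 le_rfl hn]; exact ha1
    · have hk1 : 1 ≤ k := by omega
      by_cases hkn : k = n
      · rw [hTk k hk1 hk, hkn, hTn1]; exact hbn
      · have hklt : k < n := by omega
        rw [hTk k hk1 hk, hTk (k+1) (by omega) (by omega)]
        exact hy k (k+1) hk1 (Nat.lt_succ_self k) (by omega)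
  set c : ℕ → ℝ := fun k => if k = 0 then 0 else gsp (y k) with hcdef
  have hpieceD : ∀ k, k ≤ n → ∀ x ∈ Ioo (T k) (T (k+1)),
      HasDerivAt (iteratedDeriv (2*μ) θs) (c k) x ∧ gsp x = c k := by
    intro k hk x hx
    have hknot : ∀ i, 1 ≤ i → i ≤ n → x ≠ y i := by
      intro i h1 h2
      by_cases k0 : k = 0
      · have hx1 : x < y 1 := by
          have := hx.2; subst k0; rwa [hTk 1 le_rfl hn] at this
        exact ne_of_lt (lt_of_lt_of_le hx1 (hyle 1 i le_rfl h1 h2))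
      · have hk1 : 1 ≤ k := by omega
        have hxk : y k < x := by have := hx.1; rwa [hTk k hk1 hk] at this
        rcases le_or_gt i k with hik | hki
        · exact ne_of_gt (lt_of_le_of_lt (hyle i k h1 hik hk) hxk)
        · have hkn : k < n := lt_of_lt_of_le hki h2
          have hxk1 : x < y (k+1) := by
            have := hx.2; rwa [hTk (k+1) (by omega) (by omega)] at this
          exact ne_of_lt (lt_of_lt_of_le hxk1 (hyle (k+1) i (by omega) hki h2))
    obtain ⟨p, hp⟩ : ∃ p : Polynomial ℝ, θs =ᶠ[nhds x] fun z => p.eval z := by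
      by_cases k0 : k = 0
      · obtain ⟨p, hp⟩ := hpoly1
        have hx1 : x < y 1 := by
          have := hx.2; subst k0; rwa [hTk 1 le_rfl hn] at this
        exact ⟨p, by filter_upwards [Iio_mem_nhds hx1] with z hz using hp z hz⟩
      · have hk1 : 1 ≤ k := by omega
        have hxk : y k < x := by have := hx.1; rwa [hTk k hk1 hk] at this
        by_cases hkn : k = n
        · obtain ⟨p, hp⟩ := hpoly3
          subst hkn
          exact ⟨p, by filter_upwards [Ioi_mem_nhds hxk] with z hz using hp z hz⟩
        · have hklt : k < n := by omega
          obtain ⟨p, hp⟩ := hpoly2 k hk1 hklt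
          have hxk1 : x < y (k+1) := by
            have := hx.2; rwa [hTk (k+1) (by omega) (by omega)] at this
          exact ⟨p, by filter_upwards [Ioo_mem_nhds hxk hxk1] with z hz using hp z hz.1 hz.2⟩
    have hev := eventuallyEq_iteratedDeriv hp (2*μ)
    have hev1 := eventuallyEq_iteratedDeriv hp (2*μ+1)
    have hpd : HasDerivAt (iteratedDeriv (2*μ) (fun z => p.eval z))
        (iteratedDeriv (2*μ+1) (fun z => p.eval z) x) x := by
      rw [poly_iteratedDeriv p (2*μ), poly_iteratedDeriv p (2*μ+1)]
      have := Polynomial.hasDerivAt (Polynomial.derivative^[2*μ] p) x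
      simpa [Function.iterate_succ_apply'] using this
    have hD : HasDerivAt (iteratedDeriv (2*μ) θs)
        (iteratedDeriv (2*μ+1) (fun z => p.eval z) x) x :=
      hpd.congr_of_eventuallyEq hev
    have hval : gsp x = iteratedDeriv (2*μ+1) (fun z => p.eval z) x := by
      rw [hgspd x hknot]; exact hev1.eq_of_nhds
    have hgspck : gsp x = c k := by
      by_cases k0 : k = 0
      · have hx1 : x < y 1 := by
          have := hx.2; subst k0; rwa [hTk 1 le_rfl hn] at this
        subst k0; simp [hcdef, hgsp0 x (Or.inl hx1)]
      · have hk1 : 1 ≤ k := by omega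
        have hxk : y k < x := by have := hx.1; rwa [hTk k hk1 hk] at this
        have : gsp x = gsp (y k) := by
          apply hgspc k hk1 hk x hxk.le
          intro hkn
          have := hx.2; rwa [hTk (k+1) (by omega) (by omega)] at this
        simp [hcdef, k0, this]
    constructor
    · have : c k = iteratedDeriv (2*μ+1) (fun z => p.eval z) x := by rw [← hgspck, hval]
      rw [this]; exact hD
    · exact hgspck
  have hucont : Continuous (iteratedDeriv (2*μ) θs) :=
    hC2.continuous_iteratedDeriv _ (by exact_mod_cast le_rfl)
  have hvcont : ∀ k : ℕ, Continuous (iteratedDeriv k h) :=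
    fun k => hsm.continuous_iteratedDeriv _ (by exact_mod_cast le_top)
  have hh' : ∀ x, HasDerivAt h (iteratedDeriv 1 h x) x := by
    intro x
    have := hasDerivAt_iteratedDeriv_of_smooth hsm 0 x
    simpa [iteratedDeriv_zero] using this
  have hpiece : ∀ k, k ≤ n →
      (∫ x in T k..T (k+1), iteratedDeriv (2*μ) θs x * iteratedDeriv 2 h x
        = iteratedDeriv (2*μ) θs (T (k+1)) * iteratedDeriv 1 h (T (k+1))
          - iteratedDeriv (2*μ) θs (T k) * iteratedDeriv 1 h (T k)
          - c k * (h (T (k+1)) - h (T k))) := by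
    intro k hk
    set p : ℝ := T k with hpdef
    set q : ℝ := T (k+1) with hqdef
    have hpq : p < q := hTmono k hk
    have hIoo : ∀ x, x ∈ Set.Ioo p q → gsp x = c k := fun x hx => (hpieceD k hk x hx).2
    have hgspII : IntervalIntegrable gsp volume p q := by
      apply (intervalIntegrable_const (c := c k)).congr_ae
      rw [Set.uIoc_of_le hpq.le, Filter.EventuallyEq, ae_restrict_iff' measurableSet_Ioc, ae_iff]
      refine measure_mono_null (fun x hx => ?_) (measure_singleton q)
      simp only [Set.mem_setOf_eq, Classical.not_imp] at hx
      obtain ⟨hmem, hne⟩ := hx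
      by_contra hqne
      have hxIoo : x ∈ Set.Ioo p q := ⟨hmem.1, lt_of_le_of_ne hmem.2 (by simpa using hqne)⟩
      exact hne (hIoo x hxIoo).symm
    have hint1 : ∫ x in p..q, gsp x * iteratedDeriv 1 h x = c k * (h q - h p) := by
      have hcongr : ∫ x in p..q, gsp x * iteratedDeriv 1 h x
          = ∫ x in p..q, c k * iteratedDeriv 1 h x := by
        apply intervalIntegral.integral_congr_ae
        rw [ae_iff]
        refine measure_mono_null (fun x hx => ?_) (measure_singleton q)
        simp only [Set.mem_setOf_eq, Classical.not_imp] at hx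
        obtain ⟨hmem, hne⟩ := hx
        rw [Set.uIoc_of_le hpq.le] at hmem
        by_contra hqne
        have hxIoo : x ∈ Set.Ioo p q := ⟨hmem.1, lt_of_le_of_ne hmem.2 (by simpa using hqne)⟩
        exact hne (by rw [hIoo x hxIoo])
      rw [hcongr, intervalIntegral.integral_const_mul,
        intervalIntegral.integral_eq_sub_of_hasDerivAt (fun t _ => hh' t)
          ((hvcont 1).intervalIntegrable p q)]
    have hibp := intervalIntegral.integral_mul_deriv_eq_deriv_mul_of_hasDerivAt
      (u := iteratedDeriv (2*μ) θs) (v := iteratedDeriv 1 h) (u' := gsp)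
      (v' := iteratedDeriv 2 h) (a := p) (b := q)
      (hucont.continuousOn) ((hvcont 1).continuousOn)
      (by
        intro x hx
        rw [min_eq_left hpq.le, max_eq_right hpq.le] at hx
        exact (hpieceD k hk x hx).2 ▸ (hpieceD k hk x hx).1)
      (fun x _ => hasDerivAt_iteratedDeriv_of_smooth hsm 1 x)
      hgspII ((hvcont 2).intervalIntegrable p q)
    rw [hibp, hint1]
  have hadj : ∀ k, k < n + 1 → IntervalIntegrable
      (fun x => iteratedDeriv (2*μ) θs x * iteratedDeriv 2 h x) volume (T k) (T (k+1)) :=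
    fun k _ => ((hucont.mul (hvcont 2)).intervalIntegrable _ _)
  have hsplit : ∑ k ∈ Finset.range (n+1),
      ∫ x in T k..T (k+1), iteratedDeriv (2*μ) θs x * iteratedDeriv 2 h x
      = ∫ x in a..b, iteratedDeriv (2*μ) θs x * iteratedDeriv 2 h x := by
    have := intervalIntegral.sum_integral_adjacent_intervals hadj
    rwa [hT0, hTn1] at this
  have htele := Finset.sum_range_sub
    (fun k => iteratedDeriv (2*μ) θs (T k) * iteratedDeriv 1 h (T k)) (n+1)
  have hbig : ∫ x in a..b, iteratedDeriv (2*μ) θs x * iteratedDeriv 2 h x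
      = - ∑ k ∈ Finset.range (n+1), c k * (h (T (k+1)) - h (T k)) := by
    rw [← hsplit,
      Finset.sum_congr rfl (fun k hk => hpiece k (Nat.lt_succ_iff.mp (Finset.mem_range.mp hk)))]
    rw [Finset.sum_sub_distrib, htele, hT0, hTn1]
    rw [hZa 1, hZb 1]
    ring
  have hstep : ∀ j, j ≤ μ →
      ∫ x in a..b, iteratedDeriv (2*μ - j) θs x * iteratedDeriv (j+2) h x
      = (-1:ℝ)^j * ∫ x in a..b, iteratedDeriv (2*μ) θs x * iteratedDeriv 2 h x := by
    intro j
    induction j with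
    | zero => intro _; simp
    | succ j ih =>
      intro hj
      have prev := ih (by omega)
      have hlt : 2*μ - (j+1) < 2*μ := by omega
      have hder : ∀ x ∈ Set.uIcc a b, HasDerivAt (iteratedDeriv (2*μ - (j+1)) θs)
          (iteratedDeriv (2*μ - j) θs x) x := by
        intro x _
        have hda := hasDerivAt_iteratedDeriv_of_contDiff hC2 hlt x
        have e : 2*μ - (j+1) + 1 = 2*μ - j := by omega
        rwa [e] at hda
      have hibp := intervalIntegral.integral_mul_deriv_eq_deriv_mul hder
        (fun x _ => hasDerivAt_iteratedDeriv_of_smooth hsm (j+2) x)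
        ((hC2.continuous_iteratedDeriv _ (by exact_mod_cast Nat.sub_le (2*μ) j)).intervalIntegrable a b)
        ((hvcont (j+3)).intervalIntegrable a b)
      have e3 : j + 1 + 2 = j + 2 + 1 := by omega
      rw [e3, hibp, hZa (j+2), hZb (j+2), prev]
      ring
  have hstepμ := hstep μ le_rfl
  have e2 : 2*μ - μ = μ := by omega
  rw [e2] at hstepμ
  have hsupp : ∀ x, x ∉ Set.Ioc a b → gθ x * iteratedDeriv (μ+1) h x = 0 := by
    intro x hx
    have hxt : x ∉ tsupport h := by
      intro hmem
      have h1 := (hR hmem).1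
      have h2 := (hR hmem).2
      apply hx
      constructor
      · have := min_le_right (y 1) (-R); simp only [hadef]; linarith
      · have := le_max_right (y n) R; simp only [hbdef]; linarith
    rw [iteratedDeriv_eq_zero_of_nmem_tsupport hxt, mul_zero]
  have hIoc : ∫ z, gθ z * iteratedDeriv (μ+1) h z
      = ∫ z in Set.Ioc a b, gθ z * iteratedDeriv (μ+1) h z :=
    (setIntegral_eq_integral_of_forall_compl_eq_zero hsupp).symm
  have hacibp := ibp_ac (F := iteratedDeriv μ θs) (f := gθ) (H := iteratedDeriv (μ+1) h)
    (H' := iteratedDeriv (μ+2) h) hab.le hLI hFTC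
    (hC2.continuous_iteratedDeriv μ (by exact_mod_cast Nat.le_mul_of_pos_left μ two_pos))
    (fun x => hasDerivAt_iteratedDeriv_of_smooth hsm (μ+1) x) (hvcont (μ+2))
    (hZa (μ+1)) (hZb (μ+1))
  have hfinal : ∫ z, gθ z * iteratedDeriv (μ+1) h z
      = (-1:ℝ)^μ * ∑ k ∈ Finset.range (n+1), c k * (h (T (k+1)) - h (T k)) := by
    rw [hIoc, hacibp, ← intervalIntegral.integral_of_le hab.le, hstepμ, hbig]
    ring
  rw [hfinal]
  congr 1
  apply Finset.sum_congr rfl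
  intro k hk
  have hkn : k ≤ n := Nat.lt_succ_iff.mp (Finset.mem_range.mp hk)
  have e4 : h (T (k+1)) = (if k + 1 ≤ n then h (y (k+1)) else 0) := by
    by_cases hc : k + 1 ≤ n
    · rw [if_pos hc, hTk (k+1) (by omega) hc]
    · have : k = n := by omega
      rw [if_neg hc, this, hTn1, hhb]
  have e5 : h (T k) = (if k = 0 then 0 else h (y k)) := by
    by_cases hc : k = 0
    · rw [if_pos hc, hc, hT0, hha]
    · rw [if_neg hc, hTk k (by omega) hkn]
  rw [e4, e5]

/-- if the maximizer `θ*` of the penalized quasi-log-likelihood over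
`W^{m,2}` has the natural-spline structure, then for every `k ∈ {1, …, n}` and every
`x ∈ [y k, y (k+1))` (with `y (n+1) = +∞`),
`θ*^{(2m−1)}(x) = ((−1)^m / (n λ)) (k − ∑_{j=1}^k r_j² e^{2θ*(y_j)})`. -/
theorem statement4 (n m : ℕ) (hn : 1 ≤ n) (hm : 1 ≤ m) (lam : ℝ) (hlam : 0 < lam)
    (y r : ℕ → ℝ) (hy : ∀ i j, 1 ≤ i → i < j → j ≤ n → y i < y j)
    (θs gθ gsp : ℝ → ℝ) (hθ : MemW m θs gθ)
    (hmax : ∀ f g : ℝ → ℝ, MemW m f g → pqll n y r lam f g ≤ pqll n y r lam θs gθ)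
    (hspline : NatSpline n m y θs gsp) :
    ∀ k, 1 ≤ k → k ≤ n → ∀ x : ℝ, y k ≤ x → (k < n → x < y (k + 1)) →
      gsp x = ((-1 : ℝ) ^ m / (n * lam)) *
        (k - ∑ j ∈ Finset.Icc 1 k, (r j) ^ 2 * Real.exp (2 * θs (y j))) := by
  classical
  obtain ⟨μ, rfl⟩ : ∃ μ, m = μ + 1 := ⟨m - 1, by omega⟩
  have hyle : ∀ i j, 1 ≤ i → i ≤ j → j ≤ n → y i ≤ y j := by
    intro i j h1 h2 h3
    rcases eq_or_lt_of_le h2 with rfl | hlt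
    · exact le_rfl
    · exact (hy i j h1 hlt h3).le
  obtain ⟨hC2', hpoly1', hpoly2', hpoly3', _, hgsp0, hgspd, hgspc⟩ := hspline
  have e1 : 2*(μ+1) - 2 = 2*μ := by omega
  have e2 : 2*(μ+1) - 1 = 2*μ+1 := by omega
  rw [e1] at hC2'
  rw [e2] at hgspd
  have hpoly1 : ∃ p : Polynomial ℝ, ∀ x, x < y 1 → θs x = p.eval x := by
    obtain ⟨p, _, hp⟩ := hpoly1'; exact ⟨p, hp⟩
  have hpoly2 : ∀ k, 1 ≤ k → k < n → ∃ p : Polynomial ℝ,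
      ∀ x, y k < x → x < y (k + 1) → θs x = p.eval x := by
    intro k h1 h2; obtain ⟨p, _, hp⟩ := hpoly2' k h1 h2; exact ⟨p, hp⟩
  have hpoly3 : ∃ p : Polynomial ℝ, ∀ x, y n < x → θs x = p.eval x := by
    obtain ⟨p, _, hp⟩ := hpoly3'; exact ⟨p, hp⟩
  set c : ℕ → ℝ := fun k => if k = 0 then 0 else gsp (y k) with hcdef
  have hnne : (n:ℝ) ≠ 0 := Nat.cast_ne_zero.mpr (by omega)
  have hlamne : lam ≠ 0 := ne_of_gt hlam
  set s : ℝ := (-1:ℝ)^μ with hsdef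
  have hss : s * s = 1 := by
    rw [hsdef, ← pow_add]
    exact Even.neg_one_pow ⟨μ, rfl⟩
  -- key recurrence from variational identity
  have recur : ∀ j, 1 ≤ j → j ≤ n →
      (1/(n:ℝ)) * (1 - r j ^ 2 * Real.exp (2 * θs (y j)))
        = lam * (s * (c (j-1) - c j)) := by
    intro j hj1 hjn
    -- separation radius
    set εL : ℝ := if 1 < j then y j - y (j-1) else 1 with hεL
    set εR : ℝ := if j < n then y (j+1) - y j else 1 with hεR
    have hεLpos : 0 < εL := by
      rw [hεL]
      split_ifs with hc
      · have := hy (j-1) j (by omega) (by omega) hjn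
        linarith
      · norm_num
    have hεRpos : 0 < εR := by
      rw [hεR]
      split_ifs with hc
      · have := hy j (j+1) hj1 (by omega) (by omega)
        linarith
      · norm_num
    set ε : ℝ := min εL εR with hεdef
    have hεpos : 0 < ε := lt_min hεLpos hεRpos
    have hsep : ∀ i, 1 ≤ i → i ≤ n → i ≠ j → ε ≤ |y i - y j| := by
      intro i h1 h2 hne
      rcases lt_or_gt_of_ne hne with hij | hij
      · have hj2 : 1 < j := by omega
        have h3 : y i ≤ y (j-1) := hyle i (j-1) h1 (by omega) (by omega)
        have h4 : y i < y j := hy i j h1 hij hjn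
        have h5 : εL = y j - y (j-1) := by rw [hεL, if_pos hj2]
        have h6 : ε ≤ εL := min_le_left _ _
        rw [abs_of_neg (by linarith : y i - y j < 0)]
        linarith
      · have hjn' : j < n := by omega
        have h3 : y (j+1) ≤ y i := hyle (j+1) i (by omega) (by omega) h2
        have h4 : y j < y i := hy j i hj1 hij h2
        have h5 : εR = y (j+1) - y j := by rw [hεR, if_pos hjn']
        have h6 : ε ≤ εR := min_le_right _ _
        rw [abs_of_pos (by linarith : 0 < y i - y j)]
        linarith
    obtain ⟨h, hsm, hcs, hone, hzero⟩ := exists_bump (y j) ε hεpos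
    have hbump : ∀ i, 1 ≤ i → i ≤ n → h (y i) = (if i = j then 1 else 0) := by
      intro i h1 h2
      by_cases hij : i = j
      · rw [if_pos hij, hij]; exact hone
      · rw [if_neg hij]; exact hzero _ (hsep i h1 h2 hij)
    have hEL := euler_lagrange n μ lam y r θs gθ hθ hmax h hsm hcs
    have hCH := chain n μ hn y hy θs gθ gsp hC2' hpoly1 hpoly2 hpoly3 hgsp0 hgspd hgspc
      hθ.2.2.1 hθ.2.1 h hsm hcs
    rw [hCH] at hEL
    -- left sum collapses
    have hLsum : ∑ i ∈ Finset.Icc 1 n, ((1 - r i ^ 2 * Real.exp (2 * θs (y i))) * h (y i))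
        = (1 - r j ^ 2 * Real.exp (2 * θs (y j))) := by
      rw [Finset.sum_eq_single_of_mem j (Finset.mem_Icc.mpr ⟨hj1, hjn⟩)]
      · rw [hbump j hj1 hjn, if_pos rfl, mul_one]
      · intro i hi hne
        have hi' := Finset.mem_Icc.mp hi
        rw [hbump i hi'.1 hi'.2, if_neg hne, mul_zero]
    -- right sum collapses
    have hRsum : ∑ k ∈ Finset.range (n+1), ((if k = 0 then 0 else gsp (y k)) *
        ((if k + 1 ≤ n then h (y (k+1)) else 0) - (if k = 0 then 0 else h (y k))))
        = c (j-1) - c j := by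
      have hsplit : ∀ k ∈ Finset.range (n+1), ((if k = 0 then 0 else gsp (y k)) *
          ((if k + 1 ≤ n then h (y (k+1)) else 0) - (if k = 0 then 0 else h (y k))))
          = c k * (if k + 1 ≤ n then h (y (k+1)) else 0) - c k * (if k = 0 then 0 else h (y k)) := by
        intro k _; rw [hcdef]; ring
      rw [Finset.sum_congr rfl hsplit, Finset.sum_sub_distrib]
      have hS1 : ∑ k ∈ Finset.range (n+1), c k * (if k + 1 ≤ n then h (y (k+1)) else 0)
          = c (j-1) := by
        rw [Finset.sum_eq_single (j-1)]
        · have hj1n : j - 1 + 1 = j := by omega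
          rw [hj1n]
          by_cases hjln : j ≤ n
          · rw [if_pos hjln, hbump j hj1 hjn, if_pos rfl, mul_one]
          · omega
        · intro k _ hne
          by_cases hkn : k + 1 ≤ n
          · rw [if_pos hkn, hbump (k+1) (by omega) hkn, if_neg (by omega), mul_zero]
          · rw [if_neg hkn, mul_zero]
        · intro hnotin
          exact absurd (Finset.mem_range.mpr (by omega)) hnotin
      have hS2 : ∑ k ∈ Finset.range (n+1), c k * (if k = 0 then 0 else h (y k)) = c j := by
        rw [Finset.sum_eq_single j]
        · rw [if_neg (by omega), hbump j hj1 hjn, if_pos rfl, mul_one]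
        · intro k hk hne
          by_cases hk0 : k = 0
          · rw [if_pos hk0, mul_zero]
          · rw [if_neg hk0,
              hbump k (by omega) (Nat.lt_succ_iff.mp (Finset.mem_range.mp hk)), if_neg hne,
              mul_zero]
        · intro hnotin
          exact absurd (Finset.mem_range.mpr (by omega)) hnotin
      rw [hS1, hS2]
    rw [hLsum] at hEL
    rw [hEL, hRsum, hsdef]
  -- inductive formula
  have hval : ∀ k, k ≤ n → c k = (-s/((n:ℝ)*lam)) *
      ((k:ℝ) - ∑ i ∈ Finset.Icc 1 k, r i ^ 2 * Real.exp (2 * θs (y i))) := by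
    intro k
    induction k with
    | zero => intro _; simp [hcdef]
    | succ k ih =>
      intro hk
      have hck := ih (by omega)
      have hrec := recur (k+1) (by omega) hk
      have hj1 : k + 1 - 1 = k := by omega
      rw [hj1] at hrec
      have hsum : ∑ i ∈ Finset.Icc 1 (k+1), r i ^ 2 * Real.exp (2 * θs (y i))
          = (∑ i ∈ Finset.Icc 1 k, r i ^ 2 * Real.exp (2 * θs (y i)))
            + r (k+1) ^ 2 * Real.exp (2 * θs (y (k+1))) := by
        rw [← Finset.sum_Icc_succ_top (by omega : 1 ≤ k + 1)]
      rw [hsum]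
      have h3 := congrArg (fun z => (n:ℝ) * (s * z)) hrec
      have h4 : s * (1 - r (k+1) ^ 2 * Real.exp (2 * θs (y (k+1))))
          = (n:ℝ) * lam * (c k - c (k+1)) := by
        calc s * (1 - r (k+1) ^ 2 * Real.exp (2 * θs (y (k+1))))
            = (n:ℝ) * (s * (1/(n:ℝ) * (1 - r (k+1) ^ 2 * Real.exp (2 * θs (y (k+1)))))) := by
              field_simp
          _ = (n:ℝ) * (s * (lam * (s * (c k - c (k+1))))) := by rw [h3]
          _ = (s*s) * ((n:ℝ)*lam*(c k - c (k+1))) := by ring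
          _ = (n:ℝ)*lam*(c k - c (k+1)) := by rw [hss, one_mul]
      field_simp at hck ⊢
      push_cast at hck ⊢
      linear_combination hck + h4
  intro k hk1 hkn x hx1 hx2
  have hgx : gsp x = c k := by
    rw [hcdef]
    simp only [if_neg (by omega : ¬ k = 0)]
    exact hgspc k hk1 hkn x hx1 hx2
  rw [hgx, hval k hkn]
  have hpow : (-1:ℝ)^(μ+1) = -s := by rw [pow_succ, hsdef]; ring
  rw [hpow]
end

section
/- Assume m ≥ 2. If θ* ∈ W^{m,2} maximizes pqll over W^{m,2}, then ∑_{j=1}^n y_j r_j² exp(2 θ*(y_j)) = ∑_{j=1}^n y_j. -/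
open MeasureTheory Real Filter Set

lemma itd_const (j : ℕ) : ∀ c : ℝ, iteratedDeriv j (fun _ : ℝ => c)
    = fun _ => if j = 0 then c else 0 := by
  induction j with
  | zero => intro c; simp [iteratedDeriv_zero]
  | succ j ih =>
    intro c
    rw [iteratedDeriv_succ']
    have h : deriv (fun _ : ℝ => c) = fun _ : ℝ => (0 : ℝ) := by funext z; simp
    rw [h, ih 0]
    simp

lemma itd_lin (k : ℕ) (hk : 1 ≤ k) (t : ℝ) :
    iteratedDeriv k (fun z : ℝ => t * z) = fun _ => if k = 1 then t else 0 := by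
  obtain ⟨j, rfl⟩ : ∃ j, k = j + 1 := ⟨k - 1, (Nat.succ_pred_eq_of_pos hk).symm⟩
  rw [iteratedDeriv_succ']
  have h : deriv (fun z : ℝ => t * z) = fun _ : ℝ => t := by
    funext z
    simpa using ((hasDerivAt_id z).const_mul t).deriv
  rw [h, itd_const j t]
  simp

lemma itd_add {k : ℕ} {f g : ℝ → ℝ} (hf : ContDiff ℝ k f) (hg : ContDiff ℝ k g) (x : ℝ) :
    iteratedDeriv k (fun z => f z + g z) x = iteratedDeriv k f x + iteratedDeriv k g x := by
  simp only [iteratedDeriv_eq_iteratedFDeriv]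
  rw [show (fun z => f z + g z) = f + g from rfl, iteratedFDeriv_add_apply hf.contDiffAt hg.contDiffAt]
  rfl

lemma memW_perturb (m : ℕ) (hm : 2 ≤ m) (θs gθ : ℝ → ℝ) (hθ : MemW m θs gθ) (t : ℝ) :
    MemW m (fun z => θs z + t * z) gθ := by
  obtain ⟨h1, h2, h3, h4⟩ := hθ
  have hlin : ContDiff ℝ (m - 1 : ℕ) (fun z : ℝ => t * z) := contDiff_const.mul contDiff_id
  have hk : 1 ≤ m - 1 := by omega
  refine ⟨h1.add hlin, h2, fun x => ?_, h4⟩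
  rw [itd_add h1 hlin x, itd_add h1 hlin 0, itd_lin _ hk t]
  have := h3 x
  ring_nf
  ring_nf at this
  linarith

/-- for `m ≥ 2`, at a maximizer `θ*` of the penalized
quasi-log-likelihood over `W^{m,2}`, `∑_{j=1}^n y_j r_j² e^{2θ*(y_j)} = ∑_{j=1}^n y_j`. -/
theorem statement6 (n m : ℕ) (hn : 1 ≤ n) (hm : 2 ≤ m) (lam : ℝ) (hlam : 0 < lam)
    (y r : ℕ → ℝ) (hy : ∀ i j, 1 ≤ i → i < j → j ≤ n → y i < y j)
    (θs gθ : ℝ → ℝ) (hθ : MemW m θs gθ)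
    (hmax : ∀ f g : ℝ → ℝ, MemW m f g → pqll n y r lam f g ≤ pqll n y r lam θs gθ) :
    ∑ j ∈ Finset.Icc 1 n, y j * ((r j) ^ 2 * Real.exp (2 * θs (y j)))
      = ∑ j ∈ Finset.Icc 1 n, y j := by
  set S := Finset.Icc 1 n
  set Φ : ℝ → ℝ := fun t => ∑ j ∈ S,
    (θs (y j) + t * y j - (1 / 2) * (r j) ^ 2 * Real.exp (2 * (θs (y j) + t * y j))) with hΦ
  -- Φ t ≤ Φ 0 for all t
  have hn0 : (0 : ℝ) < 1 / n := by
    have : (0 : ℝ) < n := by exact_mod_cast hn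
    positivity
  have hle : ∀ t : ℝ, Φ t ≤ Φ 0 := by
    intro t
    have h := hmax (fun z => θs z + t * z) gθ (memW_perturb m hm θs gθ hθ t)
    have h1 : qll n y r (fun z => θs z + t * z) ≤ qll n y r θs := by
      simpa [pqll] using h
    have e1 : qll n y r (fun z => θs z + t * z) = (1 / n) * Φ t := rfl
    have e2 : qll n y r θs = (1 / n) * Φ 0 := by
      simp only [qll, hΦ, zero_mul, add_zero]
      rfl
    rw [e1, e2] at h1
    exact le_of_mul_le_mul_left (by linarith) hn0
  have hloc : IsLocalMax Φ 0 := Filter.Eventually.of_forall hle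
  -- derivative of Φ at 0
  have hD : HasDerivAt Φ
      (∑ j ∈ S, (1 * y j - 1 / 2 * r j ^ 2 *
        (Real.exp (2 * (θs (y j) + 0 * y j)) * (2 * (1 * y j))))) 0 := by
    apply HasDerivAt.fun_sum
    intro j _
    have h1 : HasDerivAt (fun t : ℝ => θs (y j) + t * y j) (1 * y j) 0 :=
      ((hasDerivAt_id 0).mul_const (y j)).const_add (θs (y j))
    have h2 : HasDerivAt (fun t : ℝ => 2 * (θs (y j) + t * y j)) (2 * (1 * y j)) 0 :=
      h1.const_mul 2
    have h3 := h2.exp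
    exact h1.sub (h3.const_mul ((1 / 2) * (r j) ^ 2))
  have hz := hloc.hasDerivAt_eq_zero hD
  have hz' : ∑ j ∈ S, (y j - y j * ((r j) ^ 2 * Real.exp (2 * θs (y j)))) = 0 := by
    rw [← hz]
    apply Finset.sum_congr rfl
    intro j _
    ring_nf
  rw [Finset.sum_sub_distrib] at hz'
  linarith
end
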